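/- Let r,s with 1 ≤ r,s ≤ ∞, and suppose O(r)∘O(s) = Q₁∘Q₂ for graph properties Q₁ and Q₂. Then, as an unordered pair, {Q₁,Q₂} = {O(r),O(s)}. -/

import Mathlib

attribute [local instance] Classical.propDecidable

open SimpleGraph

/-- A finite simple graph, bundled. -/
structure FGraph : Type 1 where
  V : Type
  [fin : Fintype V]
  graph : SimpleGraph V

attribute [instance] FGraph.fin

namespace FGraph

/-- `G.IsInduced H` : `G` is isomorphic to an induced subgraph of `H`. -/
def IsInduced (G H : FGraph) : Prop := Nonempty (G.graph ↪g H.graph)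

/-- `G.IsSub H` : `G` is isomorphic to a subgraph of `H`. -/
def IsSub (G H : FGraph) : Prop := ∃ f : G.graph →g H.graph, Function.Injective f

/-- `G.Iso H` : `G` and `H` are isomorphic. -/
def Iso (G H : FGraph) : Prop := Nonempty (G.graph ≃g H.graph)

/-- The induced subgraph of `G` on a set `s` of vertices. -/
noncomputable def induce (G : FGraph) (s : Set G.V) : FGraph := ⟨↥s, G.graph.induce s⟩

end FGraph

/-- A class of finite graphs. -/
abbrev GProp : Type 1 := FGraph → Prop

/-- A graph property: a nonempty isomorphism-closed class of finite graphs,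
each having at least one vertex. -/
structure IsGProp (P : GProp) : Prop where
  nonempty : ∃ G, P G
  vertexNonempty : ∀ G, P G → Nonempty G.V
  isoClosed : ∀ G H, G.Iso H → P G → P H

namespace GProp

/-- The product `P ∘ Q` of two classes of graphs. -/
def prod (P Q : GProp) : GProp := fun G =>
  Nonempty G.V ∧ ∃ s : Set G.V,
    (s.Nonempty → P (G.induce s)) ∧ ((sᶜ : Set G.V).Nonempty → Q (G.induce (sᶜ : Set G.V)))

/-- The product `∏ i, Ps i` of an indexed family of classes of graphs:
the vertex set is partitioned into the (possibly empty) preimages of a map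
to the index set, and every nonempty part must induce a graph in the
corresponding class. -/
def iProd {I : Type*} (Ps : I → GProp) : GProp := fun G =>
  Nonempty G.V ∧ ∃ f : G.V → I,
    ∀ i, (f ⁻¹' {i}).Nonempty → Ps i (G.induce (f ⁻¹' {i}))

end GProp

/-- Closed under induced subgraphs with at least one vertex. -/
def IndHereditary (P : GProp) : Prop :=
  ∀ G H : FGraph, P G → H.IsInduced G → Nonempty H.V → P H

/-- Closed under subgraphs with at least one vertex. -/
def Hereditary (P : GProp) : Prop :=
  ∀ G H : FGraph, P G → H.IsSub G → Nonempty H.V → P H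

/-- Closed under induced supergraphs. -/
def GeqHereditary (P : GProp) : Prop :=
  ∀ G H : FGraph, P H → H.IsInduced G → P G


/-- `O(r)`: edgeless graphs on at least one and at most `r` vertices
(`r = ⊤` means all finite edgeless graphs). -/
def Oprop (r : ℕ∞) : GProp := fun G =>
  Nonempty G.V ∧ G.graph = ⊥ ∧ (Fintype.card G.V : ℕ∞) ≤ r

---------------------------------------------------------------------------
-- AUXILIARY MATERIAL
---------------------------------------------------------------------------
namespace Stmt4Aux

/-- Edgeless graph on `n` vertices. -/
def Kbar (n : ℕ) : FGraph := { V := Fin n, graph := ⊥ }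

/-- Complete bipartite graph. -/
def Kbip (p q : ℕ) : FGraph :=
  { V := Fin p ⊕ Fin q, graph := completeBipartiteGraph (Fin p) (Fin q) }

lemma iso_of_bot {G H : FGraph} (hG : G.graph = ⊥) (hH : H.graph = ⊥)
    (hc : Fintype.card G.V = Fintype.card H.V) : G.Iso H := by
  obtain ⟨e⟩ := Fintype.card_eq.mp hc
  exact ⟨⟨e, by intro a b; rw [hG, hH]; simp⟩⟩

lemma prod_comm (P Q : GProp) : GProp.prod P Q = GProp.prod Q P := by
  funext G; apply propext
  constructor <;> rintro ⟨hne, S, h1, h2⟩ <;>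
    exact ⟨hne, Sᶜ, h2, by rw [compl_compl]; exact h1⟩

lemma oprop_kbar (r : ℕ∞) (n : ℕ) (hn : 1 ≤ n) : Oprop r (Kbar n) ↔ (n : ℕ∞) ≤ r := by
  unfold Oprop Kbar
  simp only [Fintype.card_fin]
  constructor
  · exact fun h => h.2.2
  · exact fun h => ⟨⟨⟨0, hn⟩⟩, by trivial, h⟩

section SumIso

variable {α β : Type} [Fintype α] [Fintype β]

/-- Iso between the induced subgraph on `range Sum.inl` and the comap. -/
noncomputable def sumIsoLeft (K : SimpleGraph (α ⊕ β)) :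
    K.induce (Set.range Sum.inl) ≃g K.comap Sum.inl where
  toEquiv := (Equiv.ofInjective Sum.inl Sum.inl_injective).symm
  map_rel_iff' := by
    intro x y
    simp only [comap_adj, SimpleGraph.induce]
    rw [Equiv.apply_ofInjective_symm Sum.inl_injective x,
      Equiv.apply_ofInjective_symm Sum.inl_injective y]
    rfl

noncomputable def sumIsoRight (K : SimpleGraph (α ⊕ β)) :
    K.induce (Set.range Sum.inr) ≃g K.comap Sum.inr where
  toEquiv := (Equiv.ofInjective Sum.inr Sum.inr_injective).symm
  map_rel_iff' := by
    intro x y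
    simp only [comap_adj, SimpleGraph.induce]
    rw [Equiv.apply_ofInjective_symm Sum.inr_injective x,
      Equiv.apply_ofInjective_symm Sum.inr_injective y]
    rfl

lemma card_range_inl : Fintype.card (Set.range (Sum.inl : α → α ⊕ β)) = Fintype.card α :=
  (Fintype.card_congr (Equiv.ofInjective Sum.inl Sum.inl_injective)).symm

lemma card_range_inr : Fintype.card (Set.range (Sum.inr : β → α ⊕ β)) = Fintype.card β :=
  (Fintype.card_congr (Equiv.ofInjective Sum.inr Sum.inr_injective)).symm

end SumIso

end Stmt4Aux

namespace Stmt4Aux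

/-- The join of two bundled graphs: all cross edges present. -/
noncomputable def join (G H : FGraph) : FGraph where
  V := G.V ⊕ H.V
  graph :=
    { Adj := fun x y => match x, y with
        | .inl a, .inl b => G.graph.Adj a b
        | .inr a, .inr b => H.graph.Adj a b
        | .inl _, .inr _ => True
        | .inr _, .inl _ => True
      symm := by
        constructor; rintro (a | a) (b | b) h <;> simp_all <;> exact h.symm
      loopless := by
        constructor; rintro (a | a) h <;> simp_all }

def isoCast {V : Type} {A B : SimpleGraph V} (h : A = B) : A ≃g B := by
  subst h; exact RelIso.refl _

lemma join_comap_inl (G H : FGraph) : (join G H).graph.comap Sum.inl = G.graph := by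
  ext a b; rfl

lemma join_comap_inr (G H : FGraph) : (join G H).graph.comap Sum.inr = H.graph := by
  ext a b; rfl

lemma join_adj_cross (G H : FGraph) (a : G.V) (b : H.V) :
    (join G H).graph.Adj (Sum.inl a) (Sum.inr b) := trivial

lemma induce_bot_not_adj {G : FGraph} {S : Set G.V} (h : (G.induce S).graph = ⊥)
    {a b : G.V} (ha : a ∈ S) (hb : b ∈ S) : ¬ G.graph.Adj a b := by
  intro hab
  have : (G.graph.induce S).Adj ⟨a, ha⟩ ⟨b, hb⟩ := by
    simp [SimpleGraph.induce]; exact hab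
  rw [show (G.graph.induce S) = (G.induce S).graph from rfl, h] at this
  exact this

/-- Any member of a factor of `O(r)∘O(s)` is edgeless. -/
lemma factor_edgeless {r s : ℕ∞} {Q₁ Q₂ : GProp} (hQ₁ : IsGProp Q₁) (hQ₂ : IsGProp Q₂)
    (h : GProp.prod (Oprop r) (Oprop s) = GProp.prod Q₁ Q₂) :
    ∀ G, Q₁ G → G.graph = ⊥ := by
  intro G hG
  by_contra hne
  -- extract an edge
  have : ¬ ∀ u v, ¬ G.graph.Adj u v := fun hall => hne (by ext u v; simp [hall u v])
  push_neg at this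
  obtain ⟨u, v, huv⟩ := this
  obtain ⟨H, hH⟩ := hQ₂.nonempty
  obtain ⟨w⟩ := hQ₂.vertexNonempty H hH
  set J := join G H with hJ
  have hJmem : GProp.prod Q₁ Q₂ J := by
    refine ⟨⟨Sum.inl u⟩, Set.range Sum.inl, fun _ => ?_, fun _ => ?_⟩
    · refine hQ₁.isoClosed G _ ⟨?_⟩ hG
      exact ((sumIsoLeft J.graph).trans (isoCast (join_comap_inl G H))).symm
    · refine hQ₂.isoClosed H _ ⟨?_⟩ hH
      erw [Set.compl_range_inl]
      exact ((sumIsoRight J.graph).trans (isoCast (join_comap_inr G H))).symm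
  rw [← h] at hJmem
  obtain ⟨-, S, h1, h2⟩ := hJmem
  -- adjacent vertices lie in different parts
  have hsplit : ∀ a b : J.V, J.graph.Adj a b → (a ∈ S ↔ b ∉ S) := by
    intro a b hab
    constructor
    · intro haS hbS
      exact induce_bot_not_adj (h1 ⟨a, haS⟩).2.1 haS hbS hab
    · intro hbS
      by_contra haS
      exact induce_bot_not_adj (h2 ⟨a, haS⟩).2.1 haS hbS hab
  have h1' := hsplit _ _ (show J.graph.Adj (Sum.inl u) (Sum.inl v) from huv)
  have h2' := hsplit _ _ (join_adj_cross G H u w)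
  have h3' := hsplit _ _ (join_adj_cross G H v w)
  tauto

end Stmt4Aux

namespace Stmt4Aux

lemma kbip_adj_lr {p q : ℕ} (a : Fin p) (b : Fin q) :
    (Kbip p q).graph.Adj (Sum.inl a) (Sum.inr b) := by
  simp [Kbip]

lemma iso_symm {G H : FGraph} (h : G.Iso H) : H.Iso G := by
  obtain ⟨e⟩ := h; exact ⟨e.symm⟩

/-- The only splits of a complete bipartite graph into two (possibly empty)
independent parts are the two sides. -/
lemma kbip_split {p q : ℕ} (hp : 1 ≤ p) (hq : 1 ≤ q) (S : Set (Kbip p q).V)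
    (h1 : S.Nonempty → ((Kbip p q).induce S).graph = ⊥)
    (h2 : (Sᶜ).Nonempty → ((Kbip p q).induce Sᶜ).graph = ⊥) :
    S = Set.range Sum.inl ∨ S = Set.range Sum.inr := by
  have a0 : Fin p := ⟨0, hp⟩
  have b0 : Fin q := ⟨0, hq⟩
  by_cases hx : Sum.inl a0 ∈ S
  · left
    have hSne : S.Nonempty := ⟨_, hx⟩
    have hR : ∀ b : Fin q, Sum.inr b ∉ S := fun b hb =>
      induce_bot_not_adj (h1 hSne) hx hb (kbip_adj_lr a0 b)
    have hScne : Sᶜ.Nonempty := ⟨Sum.inr b0, hR b0⟩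
    have hL : ∀ a : Fin p, Sum.inl a ∈ S := by
      intro a
      by_contra ha
      exact induce_bot_not_adj (h2 hScne) ha (hR b0) (kbip_adj_lr a b0)
    ext x
    rcases x with a | b
    · exact ⟨fun _ => ⟨a, rfl⟩, fun _ => hL a⟩
    · exact ⟨fun h => absurd h (hR b), fun ⟨_, h⟩ => by cases h⟩
  · right
    have hScne : Sᶜ.Nonempty := ⟨_, hx⟩
    have hR : ∀ b : Fin q, Sum.inr b ∈ S := by
      intro b
      by_contra hb
      exact induce_bot_not_adj (h2 hScne) hx hb (kbip_adj_lr a0 b)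
    have hSne : S.Nonempty := ⟨Sum.inr b0, hR b0⟩
    have hL : ∀ a : Fin p, Sum.inl a ∉ S := fun a ha =>
      induce_bot_not_adj (h1 hSne) ha (hR b0) (kbip_adj_lr a b0)
    ext x
    rcases x with a | b
    · exact ⟨fun h => absurd h (hL a), fun ⟨_, h⟩ => by cases h⟩
    · exact ⟨fun _ => ⟨b, rfl⟩, fun _ => hR b⟩

lemma kbip_induce_inl_bot (p q : ℕ) :
    ((Kbip p q).induce (Set.range Sum.inl)).graph = ⊥ := by
  ext x y
  obtain ⟨_, a, rfl⟩ := x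
  obtain ⟨_, b, rfl⟩ := y
  simp [FGraph.induce, SimpleGraph.induce, Kbip]; exact fun h => h

lemma kbip_induce_inr_bot (p q : ℕ) :
    ((Kbip p q).induce (Set.range Sum.inr)).graph = ⊥ := by
  ext x y
  obtain ⟨_, a, rfl⟩ := x
  obtain ⟨_, b, rfl⟩ := y
  simp [FGraph.induce, SimpleGraph.induce, Kbip]; exact fun h => h

lemma kbip_induce_inl_card (p q : ℕ) :
    Fintype.card ((Kbip p q).induce (Set.range Sum.inl)).V = p := by
  refine (Fintype.card_congr ?_).trans (Fintype.card_fin p)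
  exact (Equiv.ofInjective (Sum.inl : Fin p → (Kbip p q).V) Sum.inl_injective).symm

lemma kbip_induce_inr_card (p q : ℕ) :
    Fintype.card ((Kbip p q).induce (Set.range Sum.inr)).V = q := by
  refine (Fintype.card_congr ?_).trans (Fintype.card_fin q)
  exact (Equiv.ofInjective (Sum.inr : Fin q → (Kbip p q).V) Sum.inr_injective).symm

lemma kbar_bot (n : ℕ) : (Kbar n).graph = ⊥ := rfl

lemma kbar_card (n : ℕ) : Fintype.card (Kbar n).V = n := Fintype.card_fin n

/-- Membership of `K_{p,q}` in a product of two edgeless, iso-closed classes. -/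
lemma bip_mem_iff (P Q : GProp)
    (hPe : ∀ G, P G → G.graph = ⊥) (hQe : ∀ G, Q G → G.graph = ⊥)
    (hPi : ∀ G H, G.Iso H → P G → P H) (hQi : ∀ G H, G.Iso H → Q G → Q H)
    (p q : ℕ) (hp : 1 ≤ p) (hq : 1 ≤ q) :
    GProp.prod P Q (Kbip p q) ↔
      (P (Kbar p) ∧ Q (Kbar q)) ∨ (P (Kbar q) ∧ Q (Kbar p)) := by
  have hlne : (Set.range (Sum.inl : Fin p → (Kbip p q).V)).Nonempty := ⟨_, ⟨⟨0, hp⟩, rfl⟩⟩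
  have hrne : (Set.range (Sum.inr : Fin q → (Kbip p q).V)).Nonempty := ⟨_, ⟨⟨0, hq⟩, rfl⟩⟩
  constructor
  · rintro ⟨-, S, h1, h2⟩
    have hsplit := kbip_split hp hq S
      (fun hS => hPe _ (h1 hS)) (fun hS => hQe _ (h2 hS))
    rcases hsplit with rfl | rfl
    · erw [show ((Set.range (Sum.inl : Fin p → (Kbip p q).V))ᶜ : Set _) = Set.range Sum.inr
        from Set.compl_range_inl] at h2
      have hP' := h1 hlne
      have hQ' := h2 hrne
      exact Or.inl ⟨hPi _ _ (iso_of_bot (hPe _ hP') (kbar_bot p)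
          (by exact (kbip_induce_inl_card p q).trans (kbar_card p).symm)) hP',
        hQi _ _ (iso_of_bot (hQe _ hQ') (kbar_bot q)
          (by exact (kbip_induce_inr_card p q).trans (kbar_card q).symm)) hQ'⟩
    · erw [show ((Set.range (Sum.inr : Fin q → (Kbip p q).V))ᶜ : Set _) = Set.range Sum.inl
        from Set.compl_range_inr] at h2
      have hP' := h1 hrne
      have hQ' := h2 hlne
      exact Or.inr ⟨hPi _ _ (iso_of_bot (hPe _ hP') (kbar_bot q)
          (by exact (kbip_induce_inr_card p q).trans (kbar_card q).symm)) hP',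
        hQi _ _ (iso_of_bot (hQe _ hQ') (kbar_bot p)
          (by exact (kbip_induce_inl_card p q).trans (kbar_card p).symm)) hQ'⟩
  · rintro (⟨hP, hQ⟩ | ⟨hP, hQ⟩)
    · refine ⟨⟨Sum.inl ⟨0, hp⟩⟩, Set.range Sum.inl, fun _ => ?_, fun _ => ?_⟩
      · exact hPi _ _ (iso_of_bot (kbar_bot p) (kbip_induce_inl_bot p q)
          (by rw [kbar_card, kbip_induce_inl_card])) hP
      · erw [show ((Set.range (Sum.inl : Fin p → (Kbip p q).V))ᶜ : Set _) = Set.range Sum.inr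
          from Set.compl_range_inl]
        exact hQi _ _ (iso_of_bot (kbar_bot q) (kbip_induce_inr_bot p q)
          (by rw [kbar_card]; exact (kbip_induce_inr_card p q).symm)) hQ
    · refine ⟨⟨Sum.inl ⟨0, hp⟩⟩, Set.range Sum.inr, fun _ => ?_, fun _ => ?_⟩
      · exact hPi _ _ (iso_of_bot (kbar_bot q) (kbip_induce_inr_bot p q)
          (by rw [kbar_card, kbip_induce_inr_card])) hP
      · erw [show ((Set.range (Sum.inr : Fin q → (Kbip p q).V))ᶜ : Set _) = Set.range Sum.inl
          from Set.compl_range_inr]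
        exact hQi _ _ (iso_of_bot (kbar_bot p) (kbip_induce_inl_bot p q)
          (by rw [kbar_card]; exact (kbip_induce_inl_card p q).symm)) hQ

end Stmt4Aux

namespace Stmt4Aux

/-- Purely combinatorial core. -/
lemma key (r s : ℕ∞) (hr : 1 ≤ r) (hrs : r ≤ s) (A B : ℕ → Prop)
    (star : ∀ p q : ℕ, 1 ≤ p → 1 ≤ q →
      ((((p : ℕ∞) ≤ r ∧ (q : ℕ∞) ≤ s) ∨ ((q : ℕ∞) ≤ r ∧ (p : ℕ∞) ≤ s)) ↔
        ((A p ∧ B q) ∨ (A q ∧ B p)))) :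
    ((∀ n : ℕ, 1 ≤ n → (A n ↔ (n : ℕ∞) ≤ r)) ∧ (∀ n : ℕ, 1 ≤ n → (B n ↔ (n : ℕ∞) ≤ s))) ∨
    ((∀ n : ℕ, 1 ≤ n → (A n ↔ (n : ℕ∞) ≤ s)) ∧ (∀ n : ℕ, 1 ≤ n → (B n ↔ (n : ℕ∞) ≤ r))) := by
  have hs : 1 ≤ s := hr.trans hrs
  have h1N : ((1 : ℕ) : ℕ∞) = 1 := by norm_num
  have diag : ∀ n : ℕ, 1 ≤ n → (n : ℕ∞) ≤ r → A n ∧ B n := by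
    intro n h1 hn
    have := (star n n h1 h1).mp (Or.inl ⟨hn, hn.trans hrs⟩)
    tauto
  have hAB1 : A 1 ∧ B 1 := diag 1 le_rfl (by rw [h1N]; exact hr)
  have up : ∀ n : ℕ, 1 ≤ n → ((A n ∨ B n) ↔ (n : ℕ∞) ≤ s) := by
    intro n h1
    have h := star n 1 h1 le_rfl
    rw [h1N] at h
    constructor
    · intro hab
      have : ((n : ℕ∞) ≤ r ∧ 1 ≤ s) ∨ (1 ≤ r ∧ (n : ℕ∞) ≤ s) := by
        apply h.mpr; tauto
      rcases this with ⟨h', -⟩ | ⟨-, h'⟩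
      · exact h'.trans hrs
      · exact h'
    · intro hns
      have := h.mp (Or.inr ⟨hr, hns⟩)
      tauto
  have cross : ∀ p q : ℕ, 1 ≤ p → 1 ≤ q → A p → B q →
      ((p : ℕ∞) ≤ r ∨ (q : ℕ∞) ≤ r) := by
    intro p q hp hq hA hB
    have := (star p q hp hq).mpr (Or.inl ⟨hA, hB⟩)
    tauto
  by_cases hcase : r = s
  · subst hcase
    left
    constructor
    · intro n h1
      exact ⟨fun hA => (up n h1).mp (Or.inl hA), fun hn => (diag n h1 hn).1⟩
    · intro n h1
      exact ⟨fun hB => (up n h1).mp (Or.inr hB), fun hn => (diag n h1 hn).2⟩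
  · have hlt : r < s := lt_of_le_of_ne hrs hcase
    have hrtop : r ≠ ⊤ := ne_top_of_lt hlt
    set n₀ : ℕ := r.toNat + 1 with hn₀def
    have hn₀cast : (n₀ : ℕ∞) = r + 1 := by
      push_cast
      rw [hn₀def, Nat.cast_add, Nat.cast_one, ENat.coe_toNat hrtop]
    have hn₀1 : 1 ≤ n₀ := Nat.le_add_left 1 _
    have hn₀r : ¬ ((n₀ : ℕ∞) ≤ r) := by
      rw [hn₀cast]
      intro hle
      exact absurd (lt_of_lt_of_le ((ENat.lt_add_one_iff hrtop).mpr le_rfl) hle) (lt_irrefl r)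
    have hn₀s : (n₀ : ℕ∞) ≤ s := by
      rw [hn₀cast]
      exact Order.add_one_le_of_lt hlt
    have hAB0 : A n₀ ∨ B n₀ := (up n₀ hn₀1).mpr hn₀s
    rcases hAB0 with hA0 | hB0
    · right
      have hBub : ∀ n : ℕ, 1 ≤ n → B n → (n : ℕ∞) ≤ r := by
        intro n h1 hB
        rcases cross n₀ n hn₀1 h1 hA0 hB with h' | h'
        · exact absurd h' hn₀r
        · exact h'
      constructor
      · intro n h1
        constructor
        · intro hA; exact (up n h1).mp (Or.inl hA)
        · intro hns
          rcases (up n h1).mpr hns with hA | hB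
          · exact hA
          · exact (diag n h1 (hBub n h1 hB)).1
      · intro n h1
        exact ⟨hBub n h1, fun hn => (diag n h1 hn).2⟩
    · left
      have hAub : ∀ n : ℕ, 1 ≤ n → A n → (n : ℕ∞) ≤ r := by
        intro n h1 hA
        rcases cross n n₀ h1 hn₀1 hA hB0 with h' | h'
        · exact h'
        · exact absurd h' hn₀r
      constructor
      · intro n h1
        exact ⟨hAub n h1, fun hn => (diag n h1 hn).1⟩
      · intro n h1
        constructor
        · intro hB; exact (up n h1).mp (Or.inr hB)
        · intro hns
          rcases (up n h1).mpr hns with hA | hB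
          · exact (diag n h1 (hAub n h1 hA)).2
          · exact hB

end Stmt4Aux

namespace Stmt4Aux

lemma oprop_iso (r : ℕ∞) : ∀ G H : FGraph, G.Iso H → Oprop r G → Oprop r H := by
  rintro G H ⟨e⟩ ⟨hne, hbot, hcard⟩
  refine ⟨⟨e.toEquiv hne.some⟩, ?_, ?_⟩
  · have hno : ∀ x y, ¬ G.graph.Adj x y := by rw [hbot]; simp
    ext a b
    constructor
    · intro hab
      exact absurd (e.symm.map_rel_iff.mpr hab) (hno _ _)
    · intro hab
      exact absurd hab (by simp)
  · rw [show Fintype.card H.V = Fintype.card G.V from Fintype.card_congr e.toEquiv.symm]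
    exact hcard

lemma eq_oprop_of (Q : GProp) (hQ : IsGProp Q) (hQe : ∀ G, Q G → G.graph = ⊥) (a : ℕ∞)
    (hiff : ∀ n : ℕ, 1 ≤ n → (Q (Kbar n) ↔ (n : ℕ∞) ≤ a)) : Q = Oprop a := by
  funext G
  apply propext
  constructor
  · intro hG
    have hne := hQ.vertexNonempty G hG
    have hbot := hQe G hG
    have hcpos : 1 ≤ Fintype.card G.V := Fintype.card_pos_iff.mpr hne
    have hk : Q (Kbar (Fintype.card G.V)) :=
      hQ.isoClosed G _ (iso_of_bot hbot (kbar_bot _) (kbar_card _).symm) hG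
    exact ⟨hne, hbot, (hiff _ hcpos).mp hk⟩
  · rintro ⟨hne, hbot, hcard⟩
    have hcpos : 1 ≤ Fintype.card G.V := Fintype.card_pos_iff.mpr hne
    have hk : Q (Kbar (Fintype.card G.V)) := (hiff _ hcpos).mpr hcard
    exact hQ.isoClosed _ G (iso_of_bot (kbar_bot _) hbot (kbar_card _)) hk

lemma main_aux (r s : ℕ∞) (hr : 1 ≤ r) (hrs : r ≤ s)
    (Q₁ Q₂ : GProp) (hQ₁ : IsGProp Q₁) (hQ₂ : IsGProp Q₂)
    (h : GProp.prod (Oprop r) (Oprop s) = GProp.prod Q₁ Q₂) :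
    (Q₁ = Oprop r ∧ Q₂ = Oprop s) ∨ (Q₁ = Oprop s ∧ Q₂ = Oprop r) := by
  have hQ1e : ∀ G, Q₁ G → G.graph = ⊥ := factor_edgeless hQ₁ hQ₂ h
  have hQ2e : ∀ G, Q₂ G → G.graph = ⊥ :=
    factor_edgeless hQ₂ hQ₁ (h.trans (prod_comm Q₁ Q₂))
  have star : ∀ p q : ℕ, 1 ≤ p → 1 ≤ q →
      ((((p : ℕ∞) ≤ r ∧ (q : ℕ∞) ≤ s) ∨ ((q : ℕ∞) ≤ r ∧ (p : ℕ∞) ≤ s)) ↔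
        ((Q₁ (Kbar p) ∧ Q₂ (Kbar q)) ∨ (Q₁ (Kbar q) ∧ Q₂ (Kbar p)))) := by
    intro p q hp hq
    rw [← oprop_kbar r p hp, ← oprop_kbar s q hq, ← oprop_kbar r q hq, ← oprop_kbar s p hp]
    rw [← bip_mem_iff (Oprop r) (Oprop s) (fun G hG => hG.2.1) (fun G hG => hG.2.1)
      (oprop_iso r) (oprop_iso s) p q hp hq]
    rw [← bip_mem_iff Q₁ Q₂ hQ1e hQ2e hQ₁.isoClosed hQ₂.isoClosed p q hp hq]
    rw [h]
  rcases key r s hr hrs (fun n => Q₁ (Kbar n)) (fun n => Q₂ (Kbar n)) star with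
    ⟨h1, h2⟩ | ⟨h1, h2⟩
  · exact Or.inl ⟨eq_oprop_of Q₁ hQ₁ hQ1e r h1, eq_oprop_of Q₂ hQ₂ hQ2e s h2⟩
  · exact Or.inr ⟨eq_oprop_of Q₁ hQ₁ hQ1e s h1, eq_oprop_of Q₂ hQ₂ hQ2e r h2⟩

end Stmt4Aux


/-- if `O(r) ∘ O(s) = Q₁ ∘ Q₂` for graph properties `Q₁, Q₂`,
then `{Q₁, Q₂} = {O(r), O(s)}` as an unordered pair. -/
theorem statement_4 (r s : ℕ∞) (hr : 1 ≤ r) (hs : 1 ≤ s)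
    (Q₁ Q₂ : GProp) (hQ₁ : IsGProp Q₁) (hQ₂ : IsGProp Q₂)
    (h : GProp.prod (Oprop r) (Oprop s) = GProp.prod Q₁ Q₂) :
    (Q₁ = Oprop r ∧ Q₂ = Oprop s) ∨ (Q₁ = Oprop s ∧ Q₂ = Oprop r) := by
  rcases le_total r s with hle | hle
  · exact Stmt4Aux.main_aux r s hr hle Q₁ Q₂ hQ₁ hQ₂ h
  · have h' : GProp.prod (Oprop s) (Oprop r) = GProp.prod Q₁ Q₂ := by
      rw [Stmt4Aux.prod_comm (Oprop s) (Oprop r), h]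
    exact (Stmt4Aux.main_aux s r hs hle Q₁ Q₂ hQ₁ hQ₂ h').symm
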